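/- Let U be an N×M real matrix, M ≥ 1, λ > 0, and let g = (1/M)·U·𝟙 be the mean of the columns of U, where 𝟙 ∈ ℝᴹ is the all-ones vector. Then (λI + (1/M)·U Uᵀ)⁻¹ g = (1/(λM))·U·( 𝟙 − (λI + (1/M)·Uᵀ U)⁻¹ Uᵀ g ); in particular the preconditioned gradient is a weighted sum of the columns of U with coefficient vector (1/(λM))·( 𝟙 − (λI + (1/M)·Uᵀ U)⁻¹ Uᵀ g ). -/

import Mathlib

open Matrix

lemma aux_posdef {n : ℕ} (lam c : ℝ) (hlam : 0 < lam) (hc : 0 ≤ c)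
    {A : Matrix (Fin n) (Fin n) ℝ} (hA : A.PosSemidef) :
    (lam • (1 : Matrix (Fin n) (Fin n) ℝ) + c • A).PosDef := by
  have h1 : (lam • (1 : Matrix (Fin n) (Fin n) ℝ)).PosDef := by
    rw [Matrix.smul_one_eq_diagonal]
    exact Matrix.posDef_diagonal_iff.mpr fun _ => hlam
  refine h1.add_posSemidef ⟨?_, fun x => ?_⟩
  · simp only [IsHermitian, conjTranspose_smul, hA.1.eq]; simp
  · have := mul_nonneg hc (hA.2 x)
    simp only [Finsupp.mul_sum] at this
    simpa [Matrix.smul_mulVec, dotProduct_smul, smul_eq_mul, mul_assoc, mul_left_comm] using this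

theorem preconditioned_gradient_weighted_sum (N M : ℕ) (hM : 1 ≤ M) (lam : ℝ) (hlam : 0 < lam)
    (U : Matrix (Fin N) (Fin M) ℝ)
    (g : Fin N → ℝ) (hg : g = (1 / (M : ℝ)) • U.mulVec (fun _ => 1)) :
    (lam • (1 : Matrix (Fin N) (Fin N) ℝ) + (1 / (M : ℝ)) • (U * Uᵀ))⁻¹.mulVec g =
      U.mulVec ((1 / (lam * (M : ℝ))) •
        ((fun _ => 1) -
          (lam • (1 : Matrix (Fin M) (Fin M) ℝ) +
            (1 / (M : ℝ)) • (Uᵀ * U))⁻¹.mulVec (Uᵀ.mulVec g))) := by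
  have hMne : (M : ℝ) ≠ 0 := Nat.cast_ne_zero.mpr (by omega)
  have hlne : lam ≠ 0 := hlam.ne'
  set ones : Fin M → ℝ := (fun _ => 1) with hones
  have hUtU : (Uᵀ * U).PosSemidef := by
    simpa [show Uᴴ = Uᵀ from by ext i j; simp] using posSemidef_conjTranspose_mul_self U
  have hUUt : (U * Uᵀ).PosSemidef := by
    simpa [show (Uᵀ)ᴴ = U from by ext i j; simp] using posSemidef_conjTranspose_mul_self Uᵀ
  set B := lam • (1 : Matrix (Fin M) (Fin M) ℝ) + (1 / (M : ℝ)) • (Uᵀ * U) with hBdef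
  set A := lam • (1 : Matrix (Fin N) (Fin N) ℝ) + (1 / (M : ℝ)) • (U * Uᵀ) with hAdef
  have hB : B.PosDef := aux_posdef lam _ hlam (by positivity) hUtU
  have hA : A.PosDef := aux_posdef lam _ hlam (by positivity) hUUt
  have hBi : B⁻¹ * B = 1 := nonsing_inv_mul B hB.det_pos.ne'.isUnit
  have hBi2 : B * B⁻¹ = 1 := mul_nonsing_inv B hB.det_pos.ne'.isUnit
  have hAi : A⁻¹ * A = 1 := nonsing_inv_mul A hA.det_pos.ne'.isUnit
  have hAU : A * U = U * B := by
    rw [hAdef, hBdef]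
    simp [Matrix.add_mul, Matrix.mul_add, Matrix.smul_mul, Matrix.mul_smul, Matrix.mul_assoc]
  have hUtg : Uᵀ.mulVec g = B.mulVec ones - lam • ones := by
    rw [hg, hBdef]
    simp [mulVec_smul, mulVec_mulVec, add_mulVec, smul_mulVec, one_mulVec]
  have key : ones - B⁻¹.mulVec (Uᵀ.mulVec g) = lam • B⁻¹.mulVec ones := by
    rw [hUtg, mulVec_sub, mulVec_mulVec, hBi, one_mulVec, mulVec_smul]
    simp
  rw [key]
  have hsm : (1 / (lam * (M : ℝ))) • (lam • B⁻¹.mulVec ones)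
      = (1 / (M : ℝ)) • B⁻¹.mulVec ones := by
    rw [smul_smul]; congr 1; field_simp
  rw [hsm]
  have hX : A.mulVec (U.mulVec ((1 / (M : ℝ)) • B⁻¹.mulVec ones)) = g := by
    rw [mulVec_smul, mulVec_smul, mulVec_mulVec, mulVec_mulVec, hAU,
      Matrix.mul_assoc, hBi2, Matrix.mul_one, hg]
  calc A⁻¹.mulVec g = A⁻¹.mulVec (A.mulVec (U.mulVec ((1 / (M : ℝ)) • B⁻¹.mulVec ones))) := by
        rw [hX]
    _ = (A⁻¹ * A).mulVec (U.mulVec ((1 / (M : ℝ)) • B⁻¹.mulVec ones)) := by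
        rw [← mulVec_mulVec]
    _ = _ := by rw [hAi, one_mulVec]
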